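/- Let F ∈ L²(S¹) with Fourier coefficients a_k and γ_k = |a_k|², and let the partition at level j > 0 satisfy Σ_{q=1}^{Q_j} λ_{jq} ≲ 1. Then for every K ∈ ℕ, Σ_{q=1}^{Q_j} |β_{jq;sK} − β_{jq;s}|² ≤ B^j Γ(2s + 1/2, 2K²B^{-2j}) · Σ_{|k|>K} γ_k. -/

import Mathlib

noncomputable section
open MeasureTheory Real

instance : Fact (0 < 2 * Real.pi) := ⟨by positivity⟩

abbrev S1 := AddCircle (2 * Real.pi)

/-- The normalized measure `ρ(dθ) = dθ/(2π)` on the circle. -/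
def rho : Measure S1 := AddCircle.haarAddCircle

/-- The weight function `w_s(x) = x^s e^{-x}`. -/
def wgt (s : ℕ) (x : ℝ) : ℝ := x ^ s * Real.exp (-x)

/-- The Mexican needlet `ψ_{jq;s}`. -/
def needlet (B : ℝ) (s : ℕ) (j : ℤ) (lam : ℝ) (xc : S1) (θ : S1) : ℂ :=
  (Real.sqrt lam : ℂ) * ∑' k : ℤ, ((wgt s ((B ^ (-j) * (k : ℝ)) ^ 2) : ℝ) : ℂ) * fourier k (θ - xc)

/-- The truncated Mexican needlet `ψ_{jq;sK}`. -/
def needletK (B : ℝ) (s : ℕ) (j : ℤ) (K : ℕ) (lam : ℝ) (xc : S1) (θ : S1) : ℂ :=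
  (Real.sqrt lam : ℂ) *
    ∑ k ∈ Finset.Icc (-(K : ℤ)) (K : ℤ),
      ((wgt s ((B ^ (-j) * (k : ℝ)) ^ 2) : ℝ) : ℂ) * fourier k (θ - xc)

/-- The needlet coefficient `β = ⟨F, ψ⟩ = ∫ F conj(ψ) dρ`. -/
def coeff (F g : S1 → ℂ) : ℂ := ∫ θ, F θ * (starRingEnd ℂ) (g θ) ∂rho

/-- Fourier coefficient `a_k = ⟨F, u_k⟩`. -/
def fcoeff (F : S1 → ℂ) (k : ℤ) : ℂ := ∫ θ, F θ * (starRingEnd ℂ) (fourier k θ) ∂rho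

/-- Upper incomplete Gamma function `Γ(a,x) = ∫_x^∞ u^{a-1} e^{-u} du`. -/
def gammaUpper (a x : ℝ) : ℝ := ∫ u in Set.Ioi x, u ^ (a - 1) * Real.exp (-u)

section Aux
open Set

open Finset in
/-- Binomial: `(x+h)^(n+1) - (x-h)^(n+1) ≥ 2(n+1) x^n h` for `x, h ≥ 0`. -/
lemma binom_diff_ge (x h : ℝ) (hx : 0 ≤ x) (hh : 0 ≤ h) (n : ℕ) :
    2 * (n + 1 : ℝ) * x ^ n * h ≤ (x + h) ^ (n + 1) - (x - h) ^ (n + 1) := by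
  have e1 : (x + h) ^ (n + 1) = ∑ k ∈ range (n + 2), x ^ k * h ^ (n + 1 - k) * (n + 1).choose k :=
    add_pow x h (n + 1)
  have e2 : (x - h) ^ (n + 1)
      = ∑ k ∈ range (n + 2), x ^ k * (-h) ^ (n + 1 - k) * (n + 1).choose k := by
    rw [sub_eq_add_neg]; exact add_pow x (-h) (n + 1)
  rw [e1, e2, ← Finset.sum_sub_distrib]
  have key : ∀ k ∈ range (n + 2),
      (0:ℝ) ≤ x ^ k * h ^ (n + 1 - k) * (n + 1).choose k
        - x ^ k * (-h) ^ (n + 1 - k) * (n + 1).choose k := by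
    intro k _
    have : (-h) ^ (n + 1 - k) ≤ h ^ (n + 1 - k) := by
      rcases Nat.even_or_odd (n + 1 - k) with he | ho
      · rw [he.neg_pow]
      · rw [ho.neg_pow]
        have : 0 ≤ h ^ (n + 1 - k) := pow_nonneg hh _
        linarith
    have hxk : (0:ℝ) ≤ x ^ k := pow_nonneg hx _
    have hchoose : (0:ℝ) ≤ ((n+1).choose k : ℝ) := Nat.cast_nonneg _
    nlinarith [mul_le_mul_of_nonneg_left this hxk]
  have hn : n ∈ range (n + 2) := Finset.mem_range.mpr (by omega)
  calc 2 * (n + 1 : ℝ) * x ^ n * h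
      = x ^ n * h ^ (n + 1 - n) * (n + 1).choose n
        - x ^ n * (-h) ^ (n + 1 - n) * (n + 1).choose n := by
        have : n + 1 - n = 1 := by omega
        rw [this, Nat.choose_succ_self_right]
        push_cast
        ring
    _ ≤ ∑ k ∈ range (n + 2), (x ^ k * h ^ (n + 1 - k) * (n + 1).choose k
        - x ^ k * (-h) ^ (n + 1 - k) * (n + 1).choose k) :=
        Finset.single_le_sum key hn


/-- `4s+1 ≤ √2 · 4^s`. -/
lemma base_ineq (s : ℕ) : (4 * s + 1 : ℝ) ≤ Real.sqrt 2 * 4 ^ s := by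
  have h2 : Real.sqrt 2 ^ 2 = 2 := Real.sq_sqrt (by norm_num)
  have h2' : (1:ℝ) ≤ Real.sqrt 2 := by nlinarith [Real.sqrt_nonneg 2]
  induction s with
  | zero => simpa using h2'
  | succ m ih =>
    rcases Nat.eq_zero_or_pos m with rfl | hm
    · norm_num; nlinarith [Real.sqrt_nonneg 2]
    · have : (1:ℝ) ≤ m := by exact_mod_cast hm
      push_cast
      push_cast at ih
      have h4 : (0:ℝ) < 4 ^ m := by positivity
      calc (4 * (m + 1) + 1 : ℝ) ≤ 4 * (4 * m + 1) := by nlinarith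
        _ ≤ 4 * (Real.sqrt 2 * 4 ^ m) := by nlinarith
        _ = Real.sqrt 2 * 4 ^ (m + 1) := by ring



lemma numeric_N (s : ℕ) (n : ℕ) (hn : 1 ≤ n) :
    (4 * s + 1 : ℝ) * (n:ℝ) ^ (4*s) ≤
      Real.sqrt 2 * 4 ^ s * ((n:ℝ) ^ (4*s+1) - ((n:ℝ) - 1) ^ (4*s+1)) := by
  have h2' : (1:ℝ) ≤ Real.sqrt 2 := by
    nlinarith [Real.sq_sqrt (by norm_num : (0:ℝ) ≤ 2), Real.sqrt_nonneg 2]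
  rcases eq_or_lt_of_le hn with rfl | h2
  · norm_num
    simpa using base_ineq s
  · -- n ≥ 2
    have hn2 : (2:ℝ) ≤ (n:ℝ) := by exact_mod_cast h2
    have hb := binom_diff_ge ((n:ℝ) - 1/2) (1/2) (by linarith) (by norm_num) (4*s)
    have hxp : (n:ℝ) - 1/2 + 1/2 = (n:ℝ) := by ring
    have hxm : (n:ℝ) - 1/2 - 1/2 = (n:ℝ) - 1 := by ring
    rw [hxp, hxm] at hb
    have hb' : (4*s+1 : ℝ) * ((n:ℝ) - 1/2) ^ (4*s)
        ≤ (n:ℝ) ^ (4*s+1) - ((n:ℝ)-1) ^ (4*s+1) := by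
      push_cast at hb ⊢; nlinarith
    have hpow : (n:ℝ) ^ (4*s) ≤ 4 ^ s * ((n:ℝ) - 1/2) ^ (4*s) := by
      have h4 : (n:ℝ)^4 ≤ 4 * ((n:ℝ) - 1/2)^4 := by
        nlinarith [sq_nonneg ((n:ℝ) - 2), sq_nonneg ((n:ℝ)^2 - 2*(n:ℝ)), sq_nonneg ((n:ℝ) - 1)]
      calc (n:ℝ) ^ (4*s) = ((n:ℝ)^4) ^ s := by rw [pow_mul]
        _ ≤ (4 * ((n:ℝ) - 1/2)^4) ^ s := by
            have hnn : (0:ℝ) ≤ (n:ℝ)^4 := by positivity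
            exact pow_le_pow_left₀ hnn h4 s
        _ = 4 ^ s * ((n:ℝ) - 1/2) ^ (4*s) := by rw [mul_pow, ← pow_mul]
    have hx0 : (0:ℝ) ≤ ((n:ℝ) - 1/2) ^ (4*s) := pow_nonneg (by linarith) _
    have hdiffpos : (0:ℝ) ≤ (n:ℝ) ^ (4*s+1) - ((n:ℝ)-1) ^ (4*s+1) := by
      nlinarith
    have h4s : (0:ℝ) < (4:ℝ) ^ s := by positivity
    calc (4 * s + 1 : ℝ) * (n:ℝ) ^ (4*s)
        ≤ (4*s+1:ℝ) * (4 ^ s * ((n:ℝ) - 1/2) ^ (4*s)) := by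
          apply mul_le_mul_of_nonneg_left hpow (by positivity)
      _ = 4 ^ s * ((4*s+1:ℝ) * ((n:ℝ) - 1/2) ^ (4*s)) := by ring
      _ ≤ 4 ^ s * ((n:ℝ) ^ (4*s+1) - ((n:ℝ)-1) ^ (4*s+1)) := by
          apply mul_le_mul_of_nonneg_left hb' (by positivity)
      _ ≤ Real.sqrt 2 * 4 ^ s * ((n:ℝ) ^ (4*s+1) - ((n:ℝ)-1) ^ (4*s+1)) := by
          nlinarith [mul_nonneg h4s.le hdiffpos]


lemma g_integrableOn (s : ℕ) (x0 : ℝ) (hx0 : 0 ≤ x0) :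
    IntegrableOn (fun u : ℝ => u ^ ((2*(s:ℝ) + 1/2) - 1) * Real.exp (-u)) (Ioi x0) := by
  have h : IntegrableOn (fun u : ℝ => Real.exp (-u) * u ^ ((2*(s:ℝ) + 1/2) - 1)) (Ioi 0) :=
    Real.GammaIntegral_convergent (by positivity)
  have h' : IntegrableOn (fun u : ℝ => u ^ ((2*(s:ℝ) + 1/2) - 1) * Real.exp (-u)) (Ioi 0) := by
    simpa [mul_comm] using h
  exact h'.mono_set (Ioi_subset_Ioi hx0)

lemma sqrt_two_c_sq (c t : ℝ) (hc : 0 ≤ c) (ht : 0 ≤ t) :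
    Real.sqrt (2*c^2*t^2) = Real.sqrt 2 * c * t := by
  have : 2*c^2*t^2 = (Real.sqrt 2 * c * t)^2 := by
    have h2 : Real.sqrt 2 ^ 2 = 2 := Real.sq_sqrt (by norm_num)
    nlinarith [h2]
  rw [this, Real.sqrt_sq (by positivity)]

lemma rpow_uval (s : ℕ) (c t : ℝ) (hc : 0 < c) (ht : 0 ≤ t) :
    (2*c^2*t^2) ^ (2*(s:ℝ) + 1/2) =
      Real.sqrt 2 * c * 4 ^ s * c^(4*s) * t ^ (4*s+1) := by
  rcases eq_or_lt_of_le ht with rfl | htpos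
  · rw [show (2*c^2*(0:ℝ)^2) = 0 by ring, Real.zero_rpow (by positivity)]
    simp
  · have hv : (0:ℝ) < 2*c^2*t^2 := by positivity
    have e1 : (2*(s:ℝ) + 1/2) = ((2*s : ℕ):ℝ) + 1/2 := by push_cast; ring
    rw [e1, Real.rpow_add hv, Real.rpow_natCast, ← Real.sqrt_eq_rpow,
      sqrt_two_c_sq c t hc.le ht]
    have e2 : (2*c^2*t^2) ^ (2*s) = 4^s * c^(4*s) * t^(4*s) := by
      calc (2*c^2*t^2) ^ (2*s) = ((2*c^2*t^2)^2) ^ s := by rw [← pow_mul]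
        _ = (4 * (c^4*t^4)) ^ s := by ring_nf
        _ = 4^s * ((c^4*t^4))^s := mul_pow _ _ _
        _ = 4^s * (c^(4*s) * t^(4*s)) := by rw [mul_pow, ← pow_mul, ← pow_mul]
        _ = _ := by ring
    rw [e2, pow_succ]
    ring

/-- Per-interval step: `2·w_s((c(m+1))²)² ≤ (1/c) ∫_{u m}^{u (m+1)} g`. -/
lemma step_ineq (s : ℕ) (c : ℝ) (hc : 0 < c) (m : ℕ) :
    2 * (wgt s ((c*((m:ℝ)+1))^2))^2 ≤
      (1/c) * ∫ u in (2*c^2*(m:ℝ)^2)..(2*c^2*((m:ℝ)+1)^2),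
        u ^ ((2*(s:ℝ) + 1/2) - 1) * Real.exp (-u) := by
  set X : ℝ := (m:ℝ)+1 with hX
  set Y : ℝ := (m:ℝ) with hY
  have hY0 : 0 ≤ Y := Nat.cast_nonneg m
  have hX0 : (0:ℝ) < X := by positivity
  have hYX : Y ≤ X := by simp [hX, hY]
  set a : ℝ := 2*c^2*Y^2 with ha
  set b : ℝ := 2*c^2*X^2 with hb
  have ha0 : 0 ≤ a := by positivity
  have hab : a ≤ b := by
    have : Y^2 ≤ X^2 := by nlinarith
    have hcc : (0:ℝ) < 2*c^2 := by positivity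
    nlinarith
  set R : ℝ := 2*(s:ℝ) + 1/2 with hR
  have hRpos : (0:ℝ) < R := by rw [hR]; positivity
  have hr1 : (-1:ℝ) < R - 1 := by rw [hR]; push_cast; linarith [Nat.cast_nonneg (α := ℝ) s]
  -- integrability
  have hg_int : IntervalIntegrable (fun u : ℝ => u ^ (R - 1) * Real.exp (-u)) volume a b := by
    rw [intervalIntegrable_iff, uIoc_of_le hab]
    exact (g_integrableOn s 0 le_rfl).mono_set (fun u hu => hu.1.trans_le' ha0 : Ioc a b ⊆ Ioi 0)
  have hp_int : IntervalIntegrable (fun u : ℝ => u ^ (R - 1) * Real.exp (-b)) volume a b :=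
    (intervalIntegral.intervalIntegrable_rpow' hr1).mul_const _
  -- lower bound for the integral
  have h1 : Real.exp (-b) * ((b ^ R - a ^ R)/R) ≤
      ∫ u in a..b, u ^ (R - 1) * Real.exp (-u) := by
    have hmono : ∫ u in a..b, u ^ (R-1) * Real.exp (-b) ≤
        ∫ u in a..b, u ^ (R-1) * Real.exp (-u) := by
      apply intervalIntegral.integral_mono_on hab hp_int hg_int
      intro u hu
      have hu0 : 0 ≤ u := le_trans ha0 hu.1
      have : Real.exp (-b) ≤ Real.exp (-u) := Real.exp_le_exp.2 (by linarith [hu.2])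
      exact mul_le_mul_of_nonneg_left this (Real.rpow_nonneg hu0 _)
    have heval : ∫ u in a..b, u ^ (R-1) * Real.exp (-b) =
        ((b ^ R - a ^ R)/R) * Real.exp (-b) := by
      rw [intervalIntegral.integral_mul_const, integral_rpow (Or.inl hr1)]
      norm_num
    rw [heval] at hmono
    linarith [hmono]
  -- rpow evaluations
  have hbR : b ^ R = Real.sqrt 2 * c * 4 ^ s * c^(4*s) * X ^ (4*s+1) :=
    rpow_uval s c X hc hX0.le
  have haR : a ^ R = Real.sqrt 2 * c * 4 ^ s * c^(4*s) * Y ^ (4*s+1) :=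
    rpow_uval s c Y hc hY0
  -- wgt evaluation
  have hwgt : (wgt s ((c*X)^2))^2 = c^(4*s) * X^(4*s) * Real.exp (-b) := by
    have h1' : Real.exp (-(c*X)^2) ^ 2 = Real.exp (-b) := by
      rw [← Real.exp_nat_mul]; congr 1; rw [hb]; push_cast; ring
    calc (wgt s ((c*X)^2))^2
        = (((c*X)^2)^s)^2 * (Real.exp (-(c*X)^2))^2 := by rw [wgt, mul_pow]
      _ = ((c*X)^(4*s)) * Real.exp (-b) := by
          rw [h1', ← pow_mul, ← pow_mul, show 2*(s*2) = 4*s from by ring]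
      _ = c^(4*s) * X^(4*s) * Real.exp (-b) := by rw [mul_pow]
  -- numeric key
  have key := numeric_N s (m+1) (Nat.le_add_left 1 m)
  push_cast at key
  rw [← hY] at key
  rw [← hX] at key
  have hX1 : X - 1 = Y := by rw [hX]; ring
  rw [hX1] at key
  -- final chain
  calc 2 * (wgt s ((c*X)^2))^2
      = c^(4*s) * Real.exp (-b) / R * (2 * X^(4*s) * R) := by
        rw [hwgt]; field_simp
    _ ≤ c^(4*s) * Real.exp (-b) / R * (Real.sqrt 2 * 4^s * (X^(4*s+1) - Y^(4*s+1))) := by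
        apply mul_le_mul_of_nonneg_left _ (by positivity)
        have h2R : 2 * X^(4*s) * R = (4*(s:ℝ)+1) * X^(4*s) := by rw [hR]; ring
        rw [h2R]; exact key
    _ = (1/c) * (Real.exp (-b) * ((b^R - a^R)/R)) := by
        rw [hbR, haR]; field_simp
    _ ≤ (1/c) * ∫ u in a..b, u ^ (R-1) * Real.exp (-u) := by
        apply mul_le_mul_of_nonneg_left h1 (by positivity)


lemma wgt_nonneg (s : ℕ) (x : ℝ) (hx : 0 ≤ x) : 0 ≤ wgt s x := by
  rw [wgt]; positivity

/-- Summability of powers of the weights along `ℕ`. -/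
lemma summable_wgt_pow (s q : ℕ) (hq : 1 ≤ q) (c : ℝ) (hc : 0 < c) :
    Summable (fun n : ℕ => (wgt s ((c*(n:ℝ))^2))^q) := by
  set r : ℝ := Real.exp (-c^2) with hr
  have hr0 : 0 ≤ r := Real.exp_nonneg _
  have hr1 : r < 1 := Real.exp_lt_one_iff.2 (by nlinarith)
  apply Summable.of_nonneg_of_le
    (fun n => pow_nonneg (wgt_nonneg s _ (by positivity)) q)
    (fun n => ?_)
  · exact (summable_pow_mul_geometric_of_norm_lt_one (2*q*s)
      (by rwa [Real.norm_of_nonneg hr0])).mul_left (c^(2*q*s))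
  · -- (wgt s ((c n)^2))^q ≤ c^(2qs) * (n^(2qs) * r^n)
    have hexp1 : Real.exp (-(c*(n:ℝ))^2) ^ q ≤ Real.exp (-(c*(n:ℝ))^2) := by
      apply pow_le_of_le_one (Real.exp_nonneg _) (Real.exp_le_one_iff.2 (neg_nonpos.2 (sq_nonneg _))) (by omega)
    have hexp2 : Real.exp (-(c*(n:ℝ))^2) ≤ r ^ n := by
      rw [hr, ← Real.exp_nat_mul]
      apply Real.exp_le_exp.2
      have h1 : (n:ℝ) ≤ (n:ℝ)^2 := by
        have := Nat.le_self_pow (two_ne_zero) n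
        exact_mod_cast this
      nlinarith [mul_nonneg (sq_nonneg c) (sub_nonneg.2 h1)]
    have hpowfac : (((c*(n:ℝ))^2)^s)^q = c^(2*q*s) * (n:ℝ)^(2*q*s) := by
      rw [← pow_mul, ← pow_mul, mul_pow, show 2*(s*q) = 2*q*s from by ring]
    calc (wgt s ((c*(n:ℝ))^2))^q
        = (((c*(n:ℝ))^2)^s)^q * Real.exp (-(c*(n:ℝ))^2) ^ q := by rw [wgt, mul_pow]
      _ ≤ (((c*(n:ℝ))^2)^s)^q * r ^ n := by
          apply mul_le_mul_of_nonneg_left (hexp1.trans hexp2)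
            (pow_nonneg (pow_nonneg (sq_nonneg _) _) _)
      _ = c^(2*q*s) * ((n:ℝ)^(2*q*s) * r ^ n) := by rw [hpowfac]; ring

lemma summable_wgt_int (s q : ℕ) (hq : 1 ≤ q) (c : ℝ) (hc : 0 < c) :
    Summable (fun k : ℤ => (wgt s ((c*(k:ℝ))^2))^q) := by
  apply Summable.of_nat_of_neg
  · exact (summable_wgt_pow s q hq c hc).congr (by intro n; norm_num)
  · apply (summable_wgt_pow s q hq c hc).congr
    intro n
    congr 2
    push_cast
    ring

/-- Main bound: the tail sum of squared weights over `ℤ`. -/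
lemma tsum_sq_wgt_le (s K : ℕ) (c : ℝ) (hc : 0 < c) :
    ∑' k : ℤ, (if (K:ℤ) < |k| then (wgt s ((c*(k:ℝ))^2))^2 else 0) ≤
      (1/c) * ∫ u in Ioi (2*c^2*(K:ℝ)^2), u ^ ((2*(s:ℝ) + 1/2) - 1) * Real.exp (-u) := by
  set g : ℝ → ℝ := fun u => u ^ ((2*(s:ℝ) + 1/2) - 1) * Real.exp (-u) with hg
  set x0 : ℝ := 2*c^2*(K:ℝ)^2 with hx0
  have hx00 : 0 ≤ x0 := by positivity
  set W : ℤ → ℝ := fun k => if (K:ℤ) < |k| then (wgt s ((c*(k:ℝ))^2))^2 else 0 with hW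
  set φ : ℕ → ℝ := fun n => if K < n then (wgt s ((c*(n:ℝ))^2))^2 else 0 with hφ
  have hφ0 : ∀ n, 0 ≤ φ n := by
    intro n; rw [hφ]; dsimp only
    split
    · exact pow_nonneg (wgt_nonneg s _ (by positivity)) 2
    · exact le_rfl
  have hval0 : ∀ k : ℤ, 0 ≤ (wgt s ((c*(k:ℝ))^2))^2 :=
    fun k => pow_nonneg (wgt_nonneg s _ (by positivity)) 2
  have hWle : ∀ k : ℤ, W k ≤ (wgt s ((c*(k:ℝ))^2))^2 := by
    intro k; rw [hW]; dsimp only; split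
    · exact le_rfl
    · exact hval0 k
  have hW0 : ∀ k : ℤ, 0 ≤ W k := by
    intro k; rw [hW]; dsimp only; split
    · exact hval0 k
    · exact le_rfl
  have hWsum : Summable W :=
    Summable.of_nonneg_of_le hW0 hWle (summable_wgt_int s 2 one_le_two c hc)
  have hφsum : Summable φ := by
    apply Summable.of_nonneg_of_le hφ0 _ (summable_wgt_pow s 2 one_le_two c hc)
    intro n; rw [hφ]; dsimp only; split
    · exact le_rfl
    · exact pow_nonneg (wgt_nonneg s _ (by positivity)) 2
  have hWnat : ∀ n : ℕ, W (n:ℤ) = φ n := by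
    intro n; rw [hW, hφ]; dsimp only
    rw [Int.abs_natCast]
    simp
  have hWneg : ∀ n : ℕ, W (-(n:ℤ)) = φ n := by
    intro n; rw [hW, hφ]; dsimp only
    rw [abs_neg, Int.abs_natCast]
    simp
  -- symmetry: sum over ℤ is twice the sum over ℕ
  have hsplit : ∑' k : ℤ, W k = 2 * ∑' n : ℕ, φ n := by
    have h := tsum_nat_add_neg hWsum
    have hL : ∑' n : ℕ, (W (n:ℤ) + W (-(n:ℤ))) = 2 * ∑' n : ℕ, φ n := by
      rw [← tsum_mul_left]
      congr 1
      funext n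
      rw [hWnat n, hWneg n]; ring
    have hW0' : W 0 = 0 := by
      rw [hW]; dsimp only
      rw [if_neg (by simp)]
    rw [hL, hW0', add_zero] at h
    exact h.symm
  -- the ℕ-sum is bounded by the incomplete Gamma integral
  have hφle : ∑' n : ℕ, φ n ≤ (1/(2*c)) * ∫ u in Ioi x0, g u := by
    apply Summable.tsum_le_of_sum_le hφsum
    intro S
    obtain ⟨N, hN⟩ := S.exists_nat_subset_range
    set a : ℕ → ℝ := fun i => 2*c^2*((K+i:ℕ):ℝ)^2 with ha
    have hamono : ∀ i j, i ≤ j → a i ≤ a j := by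
      intro i j hij
      rw [ha]; dsimp only
      have h1 : ((K+i:ℕ):ℝ) ≤ ((K+j:ℕ):ℝ) := by exact_mod_cast by omega
      have h2 : (0:ℝ) ≤ ((K+i:ℕ):ℝ) := Nat.cast_nonneg _
      have h3 := pow_le_pow_left₀ h2 h1 2
      nlinarith [sq_nonneg c]
    have haint : ∀ i, IntervalIntegrable g volume (a i) (a (i+1)) := by
      intro i
      rw [intervalIntegrable_iff, uIoc_of_le (hamono i (i+1) (by omega))]
      apply (g_integrableOn s 0 le_rfl).mono_set
      intro u hu
      have : (0:ℝ) ≤ a i := by rw [ha]; positivity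
      exact lt_of_le_of_lt this hu.1
    have hstep : ∀ i : ℕ, (wgt s ((c*((K+1+i:ℕ):ℝ))^2))^2 ≤
        (1/(2*c)) * ∫ u in (a i)..(a (i+1)), g u := by
      intro i
      have h := step_ineq s c hc (K+i)
      have e1 : ((K+1+i:ℕ):ℝ) = ((K+i:ℕ):ℝ) + 1 := by push_cast; ring
      have e2 : a i = 2*c^2*((K+i:ℕ):ℝ)^2 := rfl
      have e3 : a (i+1) = 2*c^2*(((K+i:ℕ):ℝ)+1)^2 := by
        rw [ha]; dsimp only; push_cast; ring
      rw [e1, e2, e3]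
      rw [div_mul_eq_mul_div, one_mul, le_div_iff₀ (by positivity)]
      rw [div_mul_eq_mul_div, one_mul, le_div_iff₀ hc] at h
      push_cast at h ⊢
      nlinarith [h]
    calc ∑ n ∈ S, φ n ≤ ∑ n ∈ Finset.range N, φ n :=
          Finset.sum_le_sum_of_subset_of_nonneg hN (fun i _ _ => hφ0 i)
      _ = ∑ n ∈ (Finset.range N).filter (fun n => K < n), (wgt s ((c*(n:ℝ))^2))^2 := by
          rw [Finset.sum_filter]
      _ = ∑ n ∈ Finset.Ico (K+1) N, (wgt s ((c*(n:ℝ))^2))^2 := by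
          apply Finset.sum_congr _ (fun _ _ => rfl)
          ext n
          simp only [Finset.mem_filter, Finset.mem_range, Finset.mem_Ico]
          omega
      _ = ∑ i ∈ Finset.range (N - (K+1)), (wgt s ((c*((K+1+i:ℕ):ℝ))^2))^2 := by
          rw [Finset.sum_Ico_eq_sum_range]
      _ ≤ ∑ i ∈ Finset.range (N - (K+1)), (1/(2*c)) * ∫ u in (a i)..(a (i+1)), g u :=
          Finset.sum_le_sum (fun i _ => hstep i)
      _ = (1/(2*c)) * ∑ i ∈ Finset.range (N - (K+1)), ∫ u in (a i)..(a (i+1)), g u := by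
          rw [Finset.mul_sum]
      _ = (1/(2*c)) * ∫ u in (a 0)..(a (N - (K+1))), g u := by
          rw [intervalIntegral.sum_integral_adjacent_intervals (fun i _ => haint i)]
      _ ≤ (1/(2*c)) * ∫ u in Ioi x0, g u := by
          apply mul_le_mul_of_nonneg_left _ (by positivity)
          have ha0 : a 0 = x0 := by rw [ha, hx0]; norm_num
          rw [intervalIntegral.integral_of_le (hamono 0 _ (by omega)), ha0]
          apply setIntegral_mono_set (g_integrableOn s x0 hx00)
          · apply (ae_restrict_iff' measurableSet_Ioi).2
            apply Filter.Eventually.of_forall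
            intro u hu
            have hu0 : 0 ≤ u := le_trans hx00 (le_of_lt hu)
            show (0:ℝ) ≤ u ^ ((2*(s:ℝ) + 1/2) - 1) * Real.exp (-u)
            positivity
          · exact HasSubset.Subset.eventuallyLE Ioc_subset_Ioi_self
  rw [hsplit]
  calc 2 * ∑' n : ℕ, φ n ≤ 2 * ((1/(2*c)) * ∫ u in Ioi x0, g u) := by linarith
    _ = (1/c) * ∫ u in Ioi x0, g u := by field_simp


instance : IsProbabilityMeasure rho :=
  show IsProbabilityMeasure (@AddCircle.haarAddCircle (2*Real.pi) _) from inferInstance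

lemma norm_fourier_eq_one (k : ℤ) (θ : S1) : ‖fourier k θ‖ = 1 := Circle.norm_coe _

lemma fourier_sub_eq (k : ℤ) (θ x : S1) :
    fourier k (θ - x) = fourier k θ * fourier k (-x) := by
  rw [fourier_apply, fourier_apply, fourier_apply, sub_eq_add_neg, zsmul_add,
    AddCircle.toCircle_add, Circle.coe_mul]

lemma summable_wgt_int' (s : ℕ) (c : ℝ) (hc : 0 < c) :
    Summable (fun k : ℤ => wgt s ((c*(k:ℝ))^2)) := by
  have := summable_wgt_int s 1 le_rfl c hc
  simpa using this

lemma fcoeff_norm_le (F : S1 → ℂ) (k : ℤ) :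
    ‖fcoeff F k‖ ≤ ∫ θ, ‖F θ‖ ∂rho := by
  refine (norm_integral_le_integral_norm _).trans_eq ?_
  congr 1
  funext θ
  rw [norm_mul, RCLike.norm_conj, norm_fourier_eq_one, mul_one]

/-- Bessel/Parseval: summability of squared Fourier coefficients. -/
lemma summable_fcoeff_sq (F : S1 → ℂ) (hF : MemLp F 2 rho) :
    Summable (fun k : ℤ => ‖fcoeff F k‖^2) := by
  have hF' : MemLp F 2 (@AddCircle.haarAddCircle (2*Real.pi) _) := hF
  set f := hF'.toLp F with hf
  have h1 : ∀ k : ℤ, fcoeff F k = fourierCoeff (f : S1 → ℂ) k := by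
    intro k
    rw [fcoeff, fourierCoeff]
    apply integral_congr_ae
    filter_upwards [hF'.coeFn_toLp] with θ hθ
    rw [hθ, smul_eq_mul, fourier_neg, mul_comm]
  have h2 : Summable (fun k : ℤ => ‖fourierCoeff (f : S1 → ℂ) k‖^2) := by
    have hm : Memℓp (fun k => fourierBasis.repr f k) 2 := (fourierBasis.repr f).property
    have h3 := hm.summable (by norm_num : (0:ℝ) < ENNReal.toReal 2)
    have h4 : Summable (fun k : ℤ => ‖fourierBasis.repr f k‖^2) := by
      apply h3.congr
      intro k
      rw [show ENNReal.toReal 2 = ((2:ℕ):ℝ) by norm_num, Real.rpow_natCast]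
    apply h4.congr
    intro k
    rw [fourierBasis_repr]
  apply h2.congr
  intro k
  rw [h1 k]

/-- Cauchy–Schwarz for countable sums of nonnegative reals. -/
lemma tsum_cauchy_schwarz {p q : ℤ → ℝ} (hp : ∀ k, 0 ≤ p k) (hq : ∀ k, 0 ≤ q k)
    (hp2 : Summable (fun k => p k ^ 2)) (hq2 : Summable (fun k => q k ^ 2)) :
    (∑' k, p k * q k)^2 ≤ (∑' k, p k ^ 2) * (∑' k, q k ^ 2) := by
  set A := ∑' k, p k ^ 2 with hA
  set C := ∑' k, q k ^ 2 with hC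
  have hA0 : 0 ≤ A := tsum_nonneg (fun k => sq_nonneg _)
  have hC0 : 0 ≤ C := tsum_nonneg (fun k => sq_nonneg _)
  have hpq : Summable (fun k => p k * q k) := by
    apply Summable.of_nonneg_of_le (fun k => mul_nonneg (hp k) (hq k)) (fun k => ?_)
      ((hp2.add hq2).mul_left (1/2))
    nlinarith [sq_nonneg (p k - q k)]
  have hbound : ∀ S : Finset ℤ, ∑ k ∈ S, p k * q k ≤ Real.sqrt (A * C) := by
    intro S
    have h1 : (∑ k ∈ S, p k * q k)^2 ≤ (∑ k ∈ S, p k ^ 2) * (∑ k ∈ S, q k ^ 2) :=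
      Finset.sum_mul_sq_le_sq_mul_sq S p q
    have h2 : (∑ k ∈ S, p k ^ 2) ≤ A := hp2.sum_le_tsum S (fun k _ => sq_nonneg _)
    have h3 : (∑ k ∈ S, q k ^ 2) ≤ C := hq2.sum_le_tsum S (fun k _ => sq_nonneg _)
    have h4 : (∑ k ∈ S, p k * q k)^2 ≤ A * C := by
      have h5 : (0:ℝ) ≤ ∑ k ∈ S, q k ^ 2 := Finset.sum_nonneg (fun k _ => sq_nonneg _)
      nlinarith
    have h6 : (0:ℝ) ≤ ∑ k ∈ S, p k * q k :=
      Finset.sum_nonneg (fun k _ => mul_nonneg (hp k) (hq k))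
    calc ∑ k ∈ S, p k * q k = Real.sqrt ((∑ k ∈ S, p k * q k)^2) := (Real.sqrt_sq h6).symm
      _ ≤ Real.sqrt (A * C) := Real.sqrt_le_sqrt h4
  have h7 : ∑' k, p k * q k ≤ Real.sqrt (A * C) := Summable.tsum_le_of_sum_le hpq hbound
  have h8 : (0:ℝ) ≤ ∑' k, p k * q k := tsum_nonneg (fun k => mul_nonneg (hp k) (hq k))
  calc (∑' k, p k * q k)^2 ≤ Real.sqrt (A * C) ^ 2 := by nlinarith
    _ = A * C := Real.sq_sqrt (mul_nonneg hA0 hC0)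

/-- The per-`q` bound. -/
lemma coeff_diff_bound (s : ℕ) (B : ℝ) (hB : 1 < B) (j : ℤ) (K : ℕ)
    (F : S1 → ℂ) (hF : MemLp F 2 rho) (l : ℝ) (hl : 0 ≤ l) (x : S1) :
    ‖coeff F (needletK B s j K l x) - coeff F (needlet B s j l x)‖^2 ≤
      l * ((∑' k : ℤ, if (K:ℤ) < |k| then (wgt s ((B^(-j)*(k:ℝ))^2))^2 else 0)
        * (∑' k : ℤ, if (K:ℤ) < |k| then ‖fcoeff F k‖^2 else 0)) := by
  have hB0 : (0:ℝ) < B := by linarith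
  have hc : (0:ℝ) < B ^ (-j) := zpow_pos hB0 _
  set c : ℝ := B ^ (-j) with hcdef
  set w : ℤ → ℝ := fun k => wgt s ((c*(k:ℝ))^2) with hw
  have hw0 : ∀ k, 0 ≤ w k := fun k => wgt_nonneg s _ (by positivity)
  have hwsum : Summable w := summable_wgt_int' s c hc
  have hFi : Integrable F rho := hF.integrable one_le_two
  have hFmeas : AEStronglyMeasurable F rho := hF.1
  set C : ℝ := ∫ θ, ‖F θ‖ ∂rho with hCdef
  -- the terms of the needlet series
  set T : ℤ → S1 → ℂ := fun k θ => ((w k : ℝ) : ℂ) * fourier k (θ - x) with hT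
  have hTnorm : ∀ k θ, ‖T k θ‖ = w k := by
    intro k θ
    rw [hT]; dsimp only
    rw [norm_mul, Complex.norm_real, Real.norm_of_nonneg (hw0 k), norm_fourier_eq_one, mul_one]
  have hTcont : ∀ k, Continuous (T k) := by
    intro k
    apply continuous_const.mul
    exact (fourier k).continuous.comp (continuous_id.sub continuous_const)
  have hTsum : ∀ θ, Summable (fun k => T k θ) := by
    intro θ
    apply Summable.of_norm
    apply hwsum.congr
    intro k
    rw [hTnorm]
  -- integrability of the products
  have hMint : ∀ k : ℤ, Integrable (fun θ => F θ * (starRingEnd ℂ) (T k θ)) rho := by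
    intro k
    apply Integrable.mono' (hFi.norm.const_mul (w k))
      (hFmeas.mul (((hTcont k).star).aestronglyMeasurable))
    apply Filter.Eventually.of_forall
    intro θ
    show ‖F θ * (starRingEnd ℂ) (T k θ)‖ ≤ w k * ‖F θ‖
    rw [norm_mul, RCLike.norm_conj, hTnorm]
    exact le_of_eq (mul_comm _ _)
  -- the value of each term's integral
  set y : ℤ → ℂ := fun k => ((w k : ℝ) : ℂ) * (starRingEnd ℂ) (fourier k (-x)) * fcoeff F k
    with hy
  have hterm : ∀ k : ℤ, ∫ θ, F θ * (starRingEnd ℂ) (T k θ) ∂rho = y k := by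
    intro k
    have : ∀ θ : S1, F θ * (starRingEnd ℂ) (T k θ)
        = ((w k : ℝ) : ℂ) * (starRingEnd ℂ) (fourier k (-x)) * (F θ * (starRingEnd ℂ) (fourier k θ)) := by
      intro θ
      rw [hT]; dsimp only
      rw [fourier_sub_eq, map_mul, map_mul, Complex.conj_ofReal]
      ring
    rw [hy]; dsimp only
    calc ∫ θ, F θ * (starRingEnd ℂ) (T k θ) ∂rho
        = ∫ θ, ((w k : ℝ) : ℂ) * (starRingEnd ℂ) (fourier k (-x))
            * (F θ * (starRingEnd ℂ) (fourier k θ)) ∂rho := by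
          apply integral_congr_ae
          exact Filter.Eventually.of_forall this
      _ = ((w k : ℝ) : ℂ) * (starRingEnd ℂ) (fourier k (-x)) * fcoeff F k := by
          rw [integral_const_mul, fcoeff]
  have hynorm : ∀ k, ‖y k‖ = w k * ‖fcoeff F k‖ := by
    intro k
    rw [hy]; dsimp only
    rw [norm_mul, norm_mul, RCLike.norm_conj, Complex.norm_real,
      Real.norm_of_nonneg (hw0 k), norm_fourier_eq_one, mul_one]
  have hysum : Summable y := by
    apply Summable.of_norm
    apply Summable.of_nonneg_of_le (fun k => norm_nonneg _) (fun k => ?_) (hwsum.mul_right C)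
    rw [hynorm]
    exact mul_le_mul_of_nonneg_left (fcoeff_norm_le F k) (hw0 k)
  have hynormsum : Summable (fun k => ‖y k‖) := by
    apply Summable.of_nonneg_of_le (fun k => norm_nonneg _) (fun k => ?_) (hwsum.mul_right C)
    rw [hynorm]
    exact mul_le_mul_of_nonneg_left (fcoeff_norm_le F k) (hw0 k)
  -- value of the full needlet coefficient
  have hnorm_int : ∀ k : ℤ, (∫ θ, ‖F θ * (starRingEnd ℂ) (T k θ)‖ ∂rho) = w k * C := by
    intro k
    rw [hCdef, ← integral_const_mul]
    apply integral_congr_ae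
    apply Filter.Eventually.of_forall
    intro θ
    show ‖F θ * (starRingEnd ℂ) (T k θ)‖ = w k * ‖F θ‖
    rw [norm_mul, RCLike.norm_conj, hTnorm, mul_comm]
  have hneedlet : coeff F (needlet B s j l x) = (Real.sqrt l : ℂ) * ∑' k, y k := by
    rw [coeff]
    have h1 : ∀ θ : S1, F θ * (starRingEnd ℂ) (needlet B s j l x θ)
        = (Real.sqrt l : ℂ) * ∑' k, (F θ * (starRingEnd ℂ) (T k θ)) := by
      intro θ
      rw [needlet, ← hcdef, map_mul, Complex.conj_ofReal]
      have h2 : (starRingEnd ℂ) (∑' k : ℤ, ((wgt s ((c * (k:ℝ))^2) : ℝ) : ℂ) * fourier k (θ - x))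
          = ∑' k, (starRingEnd ℂ) (T k θ) := by
        rw [hT]
        exact tsum_star
      rw [h2]
      rw [show (Real.sqrt l : ℂ) * ∑' k, (F θ * (starRingEnd ℂ) (T k θ))
          = ∑' k, (Real.sqrt l : ℂ) * (F θ * (starRingEnd ℂ) (T k θ)) from (tsum_mul_left).symm]
      rw [show ((Real.sqrt l : ℂ)) * (∑' k, (starRingEnd ℂ) (T k θ))
          = ∑' k, (Real.sqrt l:ℂ) * (starRingEnd ℂ) (T k θ) from (tsum_mul_left).symm]
      rw [← tsum_mul_left]
      exact tsum_congr (fun k => by ring)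
    calc ∫ θ, F θ * (starRingEnd ℂ) (needlet B s j l x θ) ∂rho
        = ∫ θ, (Real.sqrt l : ℂ) * ∑' k, (F θ * (starRingEnd ℂ) (T k θ)) ∂rho :=
          integral_congr_ae (Filter.Eventually.of_forall h1)
      _ = (Real.sqrt l : ℂ) * ∫ θ, ∑' k, (F θ * (starRingEnd ℂ) (T k θ)) ∂rho :=
          integral_const_mul _ _
      _ = (Real.sqrt l : ℂ) * ∑' k, ∫ θ, F θ * (starRingEnd ℂ) (T k θ) ∂rho := by
          congr 1
          refine (integral_tsum_of_summable_integral_norm hMint ?_).symm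
          exact ((hwsum.mul_right C).congr (fun k => (hnorm_int k).symm))
      _ = (Real.sqrt l : ℂ) * ∑' k, y k := by
          congr 1
          exact tsum_congr hterm
  -- value of the truncated needlet coefficient
  have hneedletK : coeff F (needletK B s j K l x)
      = (Real.sqrt l : ℂ) * ∑ k ∈ Finset.Icc (-(K:ℤ)) (K:ℤ), y k := by
    rw [coeff]
    have h1 : ∀ θ : S1, F θ * (starRingEnd ℂ) (needletK B s j K l x θ)
        = (Real.sqrt l : ℂ) * ∑ k ∈ Finset.Icc (-(K:ℤ)) (K:ℤ),
            (F θ * (starRingEnd ℂ) (T k θ)) := by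
      intro θ
      rw [needletK, ← hcdef, map_mul, Complex.conj_ofReal, map_sum, Finset.mul_sum,
        Finset.mul_sum, Finset.mul_sum]
      apply Finset.sum_congr rfl
      intro k _
      have hfold : ((wgt s ((c * (k:ℝ)) ^ 2) : ℝ) : ℂ) * fourier k (θ - x) = T k θ := rfl
      rw [hfold]
      ring
    calc ∫ θ, F θ * (starRingEnd ℂ) (needletK B s j K l x θ) ∂rho
        = ∫ θ, (Real.sqrt l : ℂ) * ∑ k ∈ Finset.Icc (-(K:ℤ)) (K:ℤ),
            (F θ * (starRingEnd ℂ) (T k θ)) ∂rho :=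
          integral_congr_ae (Filter.Eventually.of_forall h1)
      _ = (Real.sqrt l : ℂ) * ∫ θ, ∑ k ∈ Finset.Icc (-(K:ℤ)) (K:ℤ),
            (F θ * (starRingEnd ℂ) (T k θ)) ∂rho := integral_const_mul _ _
      _ = (Real.sqrt l : ℂ) * ∑ k ∈ Finset.Icc (-(K:ℤ)) (K:ℤ),
            ∫ θ, F θ * (starRingEnd ℂ) (T k θ) ∂rho := by
          rw [integral_finset_sum _ (fun k _ => hMint k)]
      _ = (Real.sqrt l : ℂ) * ∑ k ∈ Finset.Icc (-(K:ℤ)) (K:ℤ), y k := by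
          congr 1
          exact Finset.sum_congr rfl (fun k _ => hterm k)
  -- split the series
  set z : ℤ → ℂ := fun k => if (K:ℤ) < |k| then y k else 0 with hz
  set yin : ℤ → ℂ := fun k => if k ∈ Finset.Icc (-(K:ℤ)) (K:ℤ) then y k else 0 with hyin
  have hmem : ∀ k : ℤ, k ∈ Finset.Icc (-(K:ℤ)) (K:ℤ) ↔ ¬ ((K:ℤ) < |k|) := by
    intro k
    rw [Finset.mem_Icc, not_lt, abs_le]
  have hy_split : ∀ k, y k = yin k + z k := by
    intro k
    rw [hz, hyin]; dsimp only
    by_cases h : (K:ℤ) < |k|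
    · rw [if_neg (fun hk => (hmem k).1 hk h), if_pos h]
      ring
    · rw [if_pos ((hmem k).2 h), if_neg h]
      ring
  have hz_norm : ∀ k, ‖z k‖ = (if (K:ℤ) < |k| then w k else 0)
      * (if (K:ℤ) < |k| then ‖fcoeff F k‖ else 0) := by
    intro k
    rw [hz]; dsimp only
    by_cases h : (K:ℤ) < |k|
    · rw [if_pos h, if_pos h, if_pos h, hynorm]
    · rw [if_neg h, if_neg h, if_neg h, norm_zero, mul_zero]
  have hznormsum : Summable (fun k => ‖z k‖) := by
    apply Summable.of_nonneg_of_le (fun k => norm_nonneg _) (fun k => ?_) hynormsum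
    rw [hz]; dsimp only
    by_cases h : (K:ℤ) < |k|
    · rw [if_pos h]
    · rw [if_neg h, norm_zero]; exact norm_nonneg _
  have hzsum : Summable z := Summable.of_norm hznormsum
  have hyinsum : Summable yin := by
    apply summable_of_ne_finset_zero (s := Finset.Icc (-(K:ℤ)) (K:ℤ))
    intro k hk
    rw [hyin]; dsimp only
    rw [if_neg hk]
  have htsum_split : ∑' k, y k = (∑ k ∈ Finset.Icc (-(K:ℤ)) (K:ℤ), y k) + ∑' k, z k := by
    calc ∑' k, y k = ∑' k, (yin k + z k) := tsum_congr hy_split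
      _ = (∑' k, yin k) + ∑' k, z k := Summable.tsum_add hyinsum hzsum
      _ = (∑ k ∈ Finset.Icc (-(K:ℤ)) (K:ℤ), y k) + ∑' k, z k := by
          congr 1
          rw [tsum_eq_sum (s := Finset.Icc (-(K:ℤ)) (K:ℤ))]
          · apply Finset.sum_congr rfl
            intro k hk
            rw [hyin]; dsimp only; rw [if_pos hk]
          · intro k hk
            rw [hyin]; dsimp only; rw [if_neg hk]
  -- the key identity
  have key : coeff F (needletK B s j K l x) - coeff F (needlet B s j l x)
      = -((Real.sqrt l : ℂ) * ∑' k, z k) := by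
    rw [hneedlet, hneedletK, htsum_split]
    ring
  -- norm bound via Cauchy–Schwarz
  set p : ℤ → ℝ := fun k => if (K:ℤ) < |k| then w k else 0 with hp
  set q : ℤ → ℝ := fun k => if (K:ℤ) < |k| then ‖fcoeff F k‖ else 0 with hq
  have hp0 : ∀ k, 0 ≤ p k := by
    intro k; rw [hp]; dsimp only; split
    · exact hw0 k
    · exact le_rfl
  have hq0 : ∀ k, 0 ≤ q k := by
    intro k; rw [hq]; dsimp only; split
    · exact norm_nonneg _
    · exact le_rfl
  have hp2 : Summable (fun k => p k ^ 2) := by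
    apply Summable.of_nonneg_of_le (fun k => sq_nonneg _) (fun k => ?_)
      (summable_wgt_int s 2 one_le_two c hc)
    rw [hp]; dsimp only; split
    · exact le_rfl
    · simpa using sq_nonneg (wgt s ((c*(k:ℝ))^2))
  have hq2 : Summable (fun k => q k ^ 2) := by
    apply Summable.of_nonneg_of_le (fun k => sq_nonneg _) (fun k => ?_)
      (summable_fcoeff_sq F hF)
    rw [hq]; dsimp only; split
    · exact le_rfl
    · simpa using sq_nonneg ‖fcoeff F k‖
  have hnormD : ‖coeff F (needletK B s j K l x) - coeff F (needlet B s j l x)‖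
      ≤ Real.sqrt l * ∑' k, p k * q k := by
    rw [key, norm_neg, norm_mul, Complex.norm_real, Real.norm_of_nonneg (Real.sqrt_nonneg l)]
    apply mul_le_mul_of_nonneg_left _ (Real.sqrt_nonneg l)
    calc ‖∑' k, z k‖ ≤ ∑' k, ‖z k‖ := norm_tsum_le_tsum_norm hznormsum
      _ = ∑' k, p k * q k := tsum_congr hz_norm
  have hD0 : (0:ℝ) ≤ ‖coeff F (needletK B s j K l x) - coeff F (needlet B s j l x)‖ :=
    norm_nonneg _
  have hpq0 : (0:ℝ) ≤ ∑' k, p k * q k :=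
    tsum_nonneg (fun k => mul_nonneg (hp0 k) (hq0 k))
  have hCS := tsum_cauchy_schwarz hp0 hq0 hp2 hq2
  have hps : (fun k => p k ^ 2) = fun k : ℤ => if (K:ℤ) < |k| then (wgt s ((c*(k:ℝ))^2))^2 else 0 := by
    funext k
    rw [hp]; dsimp only; split
    · rw [hw]
    · rw [show ((0:ℝ))^2 = 0 by norm_num]
  have hqs : (fun k => q k ^ 2) = fun k : ℤ => if (K:ℤ) < |k| then ‖fcoeff F k‖^2 else 0 := by
    funext k
    rw [hq]; dsimp only; split
    · rfl
    · rw [show ((0:ℝ))^2 = 0 by norm_num]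
  calc ‖coeff F (needletK B s j K l x) - coeff F (needlet B s j l x)‖^2
      ≤ (Real.sqrt l * ∑' k, p k * q k)^2 := by
        apply pow_le_pow_left₀ hD0 hnormD
    _ = l * (∑' k, p k * q k)^2 := by
        rw [mul_pow, Real.sq_sqrt hl]
    _ ≤ l * ((∑' k, p k ^ 2) * (∑' k, q k ^ 2)) := mul_le_mul_of_nonneg_left hCS hl
    _ = l * ((∑' k : ℤ, if (K:ℤ) < |k| then (wgt s ((c*(k:ℝ))^2))^2 else 0)
        * (∑' k : ℤ, if (K:ℤ) < |k| then ‖fcoeff F k‖^2 else 0)) := by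
        rw [hps, hqs]


end Aux

/-- Let `F ∈ L²(S¹)` with Fourier coefficients `a_k`, `γ_k = |a_k|²`, and let
the partition at level `j > 0` satisfy `Σ_q λ_{jq} ≲ 1`.  Then for every `K ∈ ℕ`,
`Σ_{q<Q_j} |β_{jq;sK} − β_{jq;s}|² ≤ B^j Γ(2s + 1/2, 2K²B^{-2j}) Σ_{|k|>K} γ_k`. -/
theorem coeff_truncation_error (s : ℕ) (B : ℝ) (hB : 1 < B)
    (F : S1 → ℂ) (hF : MemLp F 2 rho)
    (j : ℤ) (hj : 0 < j) (Q : ℕ) (lam : ℕ → ℝ) (xc : ℕ → S1)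
    (hlam0 : ∀ q < Q, 0 ≤ lam q)
    (hlamsum : ∑ q ∈ Finset.range Q, lam q ≤ 1) (K : ℕ) :
    ∑ q ∈ Finset.range Q,
        ‖coeff F (needletK B s j K (lam q) (xc q)) - coeff F (needlet B s j (lam q) (xc q))‖ ^ 2 ≤
      B ^ j * gammaUpper (2 * s + 1 / 2) (2 * (K : ℝ) ^ 2 * B ^ (-2 * j)) *
        ∑' k : ℤ, if (K : ℤ) < |k| then ‖fcoeff F k‖ ^ 2 else 0 := by
  have hB0 : (0:ℝ) < B := by linarith
  have hc : (0:ℝ) < B ^ (-j) := zpow_pos hB0 _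
  set A := ∑' k : ℤ, (if (K:ℤ) < |k| then (wgt s ((B^(-j)*(k:ℝ))^2))^2 else 0) with hA
  set G := ∑' k : ℤ, (if (K:ℤ) < |k| then ‖fcoeff F k‖^2 else 0) with hG
  have hA0 : 0 ≤ A := tsum_nonneg (fun k => by
    split
    · exact sq_nonneg _
    · exact le_rfl)
  have hG0 : 0 ≤ G := tsum_nonneg (fun k => by
    split
    · exact sq_nonneg _
    · exact le_rfl)
  have hAle : A ≤ B^j * gammaUpper (2*(s:ℝ) + 1/2) (2*(K:ℝ)^2*B^(-2*j)) := by
    have h := tsum_sq_wgt_le s K (B^(-j)) hc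
    have e1 : (1:ℝ)/(B^(-j)) = B^j := by
      rw [zpow_neg, one_div, inv_inv]
    have e0 : B^(-2*j) = (B^(-j))^2 := by
      rw [show (-2*j) = (-j)+(-j) from by ring, zpow_add₀ (ne_of_gt hB0), sq]
    have e2 : 2*(B^(-j))^2*(K:ℝ)^2 = 2*(K:ℝ)^2*B^(-2*j) := by
      rw [e0]; ring
    calc A ≤ (1/(B^(-j))) * ∫ u in Set.Ioi (2*(B^(-j))^2*(K:ℝ)^2),
          u ^ ((2*(s:ℝ)+1/2)-1) * Real.exp (-u) := h
      _ = B^j * gammaUpper (2*(s:ℝ) + 1/2) (2*(K:ℝ)^2*B^(-2*j)) := by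
          rw [gammaUpper, e1, ← e2]
  have h1 : ∀ q ∈ Finset.range Q,
      ‖coeff F (needletK B s j K (lam q) (xc q)) - coeff F (needlet B s j (lam q) (xc q))‖ ^ 2
        ≤ lam q * (A * G) := by
    intro q hq
    exact coeff_diff_bound s B hB j K F hF (lam q) (hlam0 q (Finset.mem_range.1 hq)) (xc q)
  calc ∑ q ∈ Finset.range Q,
        ‖coeff F (needletK B s j K (lam q) (xc q)) - coeff F (needlet B s j (lam q) (xc q))‖ ^ 2
      ≤ ∑ q ∈ Finset.range Q, lam q * (A * G) := Finset.sum_le_sum h1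
    _ = (∑ q ∈ Finset.range Q, lam q) * (A * G) := (Finset.sum_mul _ _ _).symm
    _ ≤ 1 * (A * G) := mul_le_mul_of_nonneg_right hlamsum (mul_nonneg hA0 hG0)
    _ = A * G := one_mul _
    _ ≤ (B^j * gammaUpper (2*(s:ℝ) + 1/2) (2*(K:ℝ)^2*B^(-2*j))) * G :=
        mul_le_mul_of_nonneg_right hAle hG0
    _ = B ^ j * gammaUpper (2 * (s:ℝ) + 1 / 2) (2 * (K : ℝ) ^ 2 * B ^ (-2 * j)) *
        ∑' k : ℤ, if (K : ℤ) < |k| then ‖fcoeff F k‖ ^ 2 else 0 := by rw [hG]
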